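/- The extended binomial pmf P(X=x) = p^x q^{z-x} ₀F̃₁(;x+1;p²θ) ₀F̃₁(;z-x+1;q²θ) / ₀F̃₁(;z+1;θ) defines a probability distribution on ℤ, i.e., ∑_{x∈ℤ} p^x q^{z-x} ₀F̃₁(;x+1;p²θ) ₀F̃₁(;z-x+1;q²θ) = ₀F̃₁(;z+1;θ) for every z ∈ ℤ, 0<p<1, q=1-p, θ>0. -/

import Mathlib

open MeasureTheory Real

/-- Modified Bessel function of the first kind of integer order `y`:
`I_y(x) = ∑_{k≥0} (x/2)^(y+2k) / (k! * Γ(y+k+1))`, with terms where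
`Γ` is evaluated at a nonpositive integer interpreted as zero. -/
noncomputable def besselI (y : ℤ) (x : ℝ) : ℝ :=
  ∑' k : ℕ, (x / 2) ^ (y + 2 * (k : ℤ)) / ((Nat.factorial k : ℝ) * Real.Gamma ((y : ℝ) + k + 1))

/-- Regularized confluent hypergeometric function `₀F̃₁(; y; θ) = ∑_{k≥0} θ^k/(k! Γ(y+k))`. -/
noncomputable def regF (y : ℝ) (θ : ℝ) : ℝ :=
  ∑' k : ℕ, θ ^ k / ((Nat.factorial k : ℝ) * Real.Gamma (y + k))

/-- Skellam (Poisson difference) pmf `PD(a,b)` at `z`. -/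
noncomputable def skellamPMF (a b : ℝ) (z : ℤ) : ℝ :=
  Real.exp (-a - b) * (a / b) ^ ((z : ℝ) / 2) * besselI z (2 * Real.sqrt (a * b))

/-- Extended binomial pmf `EB(z, p, θ)` at `x`. -/
noncomputable def ebPMF (z : ℤ) (p θ : ℝ) (x : ℤ) : ℝ :=
  p ^ x * (1 - p) ^ (z - x) * regF ((x : ℝ) + 1) (p ^ 2 * θ) *
    regF (((z - x : ℤ) : ℝ) + 1) ((1 - p) ^ 2 * θ) / regF ((z : ℝ) + 1) θ

noncomputable def cR (n : ℤ) : ℝ := if 0 ≤ n then ((n.toNat).factorial : ℝ)⁻¹ else 0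

lemma cR_nonneg (n : ℤ) : 0 ≤ cR n := by unfold cR; split <;> positivity

lemma cR_le_one (n : ℤ) : cR n ≤ 1 := by
  unfold cR; split
  · exact inv_le_one_of_one_le₀ (by exact_mod_cast Nat.one_le_iff_ne_zero.mpr (Nat.factorial_ne_zero _))
  · norm_num

lemma cR_neg {n : ℤ} (h : n < 0) : cR n = 0 := by unfold cR; rw [if_neg (by omega)]

lemma cR_natCast (n : ℕ) : cR n = ((n.factorial : ℝ))⁻¹ := by
  unfold cR; rw [if_pos (by positivity)]; simp

lemma gamma_int (n : ℤ) : Real.Gamma ((n : ℝ) + 1) = if 0 ≤ n then ((n.toNat).factorial : ℝ) else 0 := by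
  split_ifs with h
  · obtain ⟨m, rfl⟩ : ∃ m : ℕ, n = m := ⟨n.toNat, (Int.toNat_of_nonneg h).symm⟩
    rw [Int.toNat_natCast, Int.cast_natCast, Real.Gamma_nat_eq_factorial]
  · push_neg at h
    set m : ℕ := (-(n+1)).toNat with hm
    have hm' : (m : ℤ) = -(n+1) := Int.toNat_of_nonneg (by omega)
    have : (n : ℝ) + 1 = -(m : ℝ) := by
      have := congrArg (Int.cast : ℤ → ℝ) hm'
      push_cast at this; linarith
    rw [this, Real.Gamma_neg_nat_eq_zero]

lemma term_eq (t : ℝ) (y : ℤ) (k : ℕ) :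
    t ^ k / ((k.factorial : ℝ) * Real.Gamma ((y : ℝ) + k + 1)) = t ^ k * cR (y + k) / k.factorial := by
  have h1 : (y : ℝ) + k + 1 = ((y + (k : ℤ) : ℤ) : ℝ) + 1 := by push_cast; ring
  rw [h1, gamma_int]
  unfold cR
  split_ifs with h
  · rw [mul_comm ((k.factorial : ℝ)) _, ← div_div, div_eq_mul_inv (t ^ k)]
  · simp

lemma summable_aux {t : ℝ} (ht : 0 ≤ t) (y : ℤ) :
    Summable (fun k : ℕ => t ^ k * cR (y + k) / k.factorial) := by
  refine Summable.of_nonneg_of_le (fun k => by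
      exact div_nonneg (mul_nonneg (pow_nonneg ht _) (cR_nonneg _)) (by positivity))
    (fun k => ?_) (Real.summable_pow_div_factorial t)
  have h1 : t ^ k * cR (y + k) ≤ t ^ k := by
    nlinarith [cR_le_one (y + k), cR_nonneg (y + k), pow_nonneg ht k]
  gcongr


lemma regF_int (y : ℤ) (t : ℝ) :
    regF ((y : ℝ) + 1) t = ∑' k : ℕ, t ^ k * cR (y + k) / k.factorial := by
  unfold regF
  refine tsum_congr fun k => ?_
  rw [show (y : ℝ) + 1 + k = (y : ℝ) + k + 1 by ring, term_eq]

lemma binom {p q : ℝ} (hpq : p + q = 1) (n : ℕ) :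
    ∑ a ∈ Finset.range (n + 1), p ^ a * q ^ (n - a) / ((a.factorial : ℝ) * (n - a).factorial)
      = (n.factorial : ℝ)⁻¹ := by
  have h1 : ∀ a ∈ Finset.range (n + 1),
      p ^ a * q ^ (n - a) / ((a.factorial : ℝ) * (n - a).factorial)
        = p ^ a * q ^ (n - a) * (n.choose a : ℝ) * (n.factorial : ℝ)⁻¹ := by
    intro a ha
    have hle : a ≤ n := Nat.lt_succ_iff.mp (Finset.mem_range.mp ha)
    have keyR : ((n.choose a : ℝ)) * a.factorial * (n - a).factorial = n.factorial := by
      exact_mod_cast congrArg (Nat.cast : ℕ → ℝ) (Nat.choose_mul_factorial_mul_factorial hle)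
    have h0 : (a.factorial : ℝ) ≠ 0 := Nat.cast_ne_zero.mpr (Nat.factorial_ne_zero _)
    have h2 : ((n - a).factorial : ℝ) ≠ 0 := Nat.cast_ne_zero.mpr (Nat.factorial_ne_zero _)
    have h3 : (n.factorial : ℝ) ≠ 0 := Nat.cast_ne_zero.mpr (Nat.factorial_ne_zero _)
    have h4 : ((a.factorial : ℝ) * (n - a).factorial)⁻¹ = (n.choose a : ℝ) * (n.factorial : ℝ)⁻¹ := by
      field_simp
      linear_combination -keyR
    rw [div_eq_mul_inv, h4]; ring
  rw [Finset.sum_congr rfl h1, ← Finset.sum_mul,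
    show ∑ a ∈ Finset.range (n + 1), p ^ a * q ^ (n - a) * (n.choose a : ℝ) = (p + q) ^ n from
      (add_pow p q n).symm, hpq, one_pow, one_mul]

lemma icc_sum {p q : ℝ} (hpq : p + q = 1) (N : ℤ) :
    ∑ a ∈ Finset.Icc (0 : ℤ) N, cR a * p ^ a * (cR (N - a) * q ^ (N - a)) = cR N := by
  rcases lt_or_ge N 0 with h | h
  · rw [Finset.Icc_eq_empty (by omega), Finset.sum_empty, cR_neg h]
  · obtain ⟨n, rfl⟩ : ∃ n : ℕ, N = n := ⟨N.toNat, (Int.toNat_of_nonneg h).symm⟩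
    have hmap : Finset.Icc (0 : ℤ) (n : ℤ)
        = (Finset.range (n + 1)).map ⟨(Nat.cast : ℕ → ℤ), Nat.cast_injective⟩ := by
      ext a
      simp only [Finset.mem_Icc, Finset.mem_map, Finset.mem_range, Function.Embedding.coeFn_mk]
      constructor
      · rintro ⟨h0, hN⟩; exact ⟨a.toNat, by omega, by omega⟩
      · rintro ⟨b, hb, rfl⟩; omega
    rw [hmap, Finset.sum_map, cR_natCast, ← binom hpq n]
    refine Finset.sum_congr rfl fun b hb => ?_
    have hb' : b ≤ n := Nat.lt_succ_iff.mp (Finset.mem_range.mp hb)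
    simp only [Function.Embedding.coeFn_mk]
    have h1 : (n : ℤ) - b = ((n - b : ℕ) : ℤ) := by omega
    rw [h1, cR_natCast, cR_natCast, zpow_natCast, zpow_natCast, div_eq_mul_inv, mul_inv]
    ring

lemma antidiag_sum {p q θ : ℝ} (hpq : p + q = 1) (z : ℤ) (m : ℕ) :
    ∑ jk ∈ Finset.HasAntidiagonal.antidiagonal m,
        θ ^ (jk.1 + jk.2) * p ^ jk.1 * q ^ jk.2 / ((jk.1.factorial : ℝ) * jk.2.factorial)
          * cR (z + jk.1 + jk.2)
      = θ ^ m * cR (z + m) / m.factorial := by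
  rw [Finset.Nat.sum_antidiagonal_eq_sum_range_succ_mk]
  have h1 : ∀ b ∈ Finset.range (m + 1),
      θ ^ (b + (m - b)) * p ^ b * q ^ (m - b) / ((b.factorial : ℝ) * (m - b).factorial)
          * cR (z + b + (m - b : ℕ))
        = θ ^ m * cR (z + m) * (p ^ b * q ^ (m - b) / ((b.factorial : ℝ) * (m - b).factorial)) := by
    intro b hb
    have hb' : b ≤ m := Nat.lt_succ_iff.mp (Finset.mem_range.mp hb)
    rw [Nat.add_sub_cancel' hb', show z + b + ((m - b : ℕ) : ℤ) = z + m by omega]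
    ring
  rw [Finset.sum_congr rfl h1, ← Finset.mul_sum, binom hpq m, div_eq_mul_inv]

theorem eb_pmf_sums_to_one (z : ℤ) (p θ : ℝ) (hp : 0 < p) (hp1 : p < 1) (hθ : 0 < θ) :
    ∑' x : ℤ, p ^ x * (1 - p) ^ (z - x) * regF ((x : ℝ) + 1) (p ^ 2 * θ) *
        regF (((z - x : ℤ) : ℝ) + 1) ((1 - p) ^ 2 * θ)
      = regF ((z : ℝ) + 1) θ := by
  obtain ⟨q, hqdef⟩ : ∃ q : ℝ, q = 1 - p := ⟨1 - p, rfl⟩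
  rw [show (1 : ℝ) - p = q from hqdef.symm]
  have hq : 0 < q := by rw [hqdef]; linarith
  have hpq : p + q = 1 := by rw [hqdef]; ring
  have hA : 0 ≤ p ^ 2 * θ := by positivity
  have hB : 0 ≤ q ^ 2 * θ := by positivity
  -- the term of the triple sum
  set T : ℤ → ℕ × ℕ → ℝ := fun x jk =>
    p ^ x * q ^ (z - x) *
      ((p ^ 2 * θ) ^ jk.1 * cR (x + jk.1) / jk.1.factorial *
        ((q ^ 2 * θ) ^ jk.2 * cR (z - x + jk.2) / jk.2.factorial)) with hT
  have hTnn : ∀ x jk, 0 ≤ T x jk := by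
    intro x ⟨j, k⟩
    refine mul_nonneg (by positivity) (mul_nonneg ?_ ?_) <;>
      exact div_nonneg (mul_nonneg (by positivity) (cR_nonneg _)) (by positivity)
  have hfs : ∀ x : ℤ, Summable fun j : ℕ => ‖(p ^ 2 * θ) ^ j * cR (x + j) / (j.factorial : ℝ)‖ := by
    intro x
    simp only [Real.norm_eq_abs]
    exact (summable_aux hA x).abs
  have hgs : ∀ x : ℤ, Summable fun k : ℕ => ‖(q ^ 2 * θ) ^ k * cR (z - x + k) / (k.factorial : ℝ)‖ := by
    intro x
    simp only [Real.norm_eq_abs]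
    exact (summable_aux hB (z - x)).abs
  have hTsum : ∀ x : ℤ, Summable (T x) := fun x =>
    (summable_mul_of_summable_norm (hfs x) (hgs x)).mul_left _
  have h1 : ∀ x : ℤ, p ^ x * q ^ (z - x) * regF ((x : ℝ) + 1) (p ^ 2 * θ) *
      regF (((z - x : ℤ) : ℝ) + 1) (q ^ 2 * θ) = ∑' jk : ℕ × ℕ, T x jk := by
    intro x
    rw [regF_int x, regF_int (z - x), mul_assoc,
      tsum_mul_tsum_of_summable_norm (hfs x) (hgs x), ← tsum_mul_left]
  -- the ENNReal computation
  set S : ℤ → ℝ := fun x => ∑' jk : ℕ × ℕ, T x jk with hS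
  have hSnn : ∀ x, 0 ≤ S x := fun x => tsum_nonneg (hTnn x)
  have key : ∑' x : ℤ, ENNReal.ofReal (S x) = ENNReal.ofReal (regF ((z : ℝ) + 1) θ) := by
    have hCnn : ∀ jk : ℕ × ℕ, 0 ≤ θ ^ (jk.1 + jk.2) * p ^ jk.1 * q ^ jk.2 /
        ((jk.1.factorial : ℝ) * jk.2.factorial) := fun jk => by positivity
    have hvnn : ∀ (N a : ℤ), 0 ≤ cR a * p ^ a * (cR (N - a) * q ^ (N - a)) := fun N a =>
      mul_nonneg (mul_nonneg (cR_nonneg _) (by positivity)) (mul_nonneg (cR_nonneg _) (by positivity))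
    calc ∑' x : ℤ, ENNReal.ofReal (S x)
        = ∑' (x : ℤ) (jk : ℕ × ℕ), ENNReal.ofReal (T x jk) := by
          exact tsum_congr fun x => ENNReal.ofReal_tsum_of_nonneg (hTnn x) (hTsum x)
      _ = ∑' (jk : ℕ × ℕ) (x : ℤ), ENNReal.ofReal (T x jk) := ENNReal.tsum_comm
      _ = ∑' jk : ℕ × ℕ, ENNReal.ofReal (θ ^ (jk.1 + jk.2) * p ^ jk.1 * q ^ jk.2 /
            ((jk.1.factorial : ℝ) * jk.2.factorial) * cR (z + jk.1 + jk.2)) := by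
          refine tsum_congr fun jk => ?_
          obtain ⟨j, k⟩ := jk
          simp only
          have hpt : ∀ x : ℤ, T x (j, k) = (θ ^ (j + k) * p ^ j * q ^ k /
              ((j.factorial : ℝ) * k.factorial)) *
              ((fun a : ℤ => cR a * p ^ a * (cR (z + j + k - a) * q ^ (z + j + k - a)))
                (x + (j : ℤ))) := by
            intro x
            simp only [hT]
            rw [show z + j + k - (x + (j : ℤ)) = z - x + k by ring,
              zpow_add₀ (ne_of_gt hp) x (j : ℤ), zpow_add₀ (ne_of_gt hq) (z - x) (k : ℤ),
              zpow_natCast, zpow_natCast, mul_pow, mul_pow]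
            ring
          calc ∑' x : ℤ, ENNReal.ofReal (T x (j, k))
              = ∑' x : ℤ, ENNReal.ofReal (θ ^ (j + k) * p ^ j * q ^ k /
                  ((j.factorial : ℝ) * k.factorial)) *
                  ENNReal.ofReal ((fun a : ℤ => cR a * p ^ a *
                    (cR (z + j + k - a) * q ^ (z + j + k - a))) (x + (j : ℤ))) := by
                refine tsum_congr fun x => ?_
                rw [hpt x, ENNReal.ofReal_mul (hCnn (j, k))]
            _ = ENNReal.ofReal (θ ^ (j + k) * p ^ j * q ^ k /
                  ((j.factorial : ℝ) * k.factorial)) *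
                ∑' x : ℤ, ENNReal.ofReal ((fun a : ℤ => cR a * p ^ a *
                    (cR (z + j + k - a) * q ^ (z + j + k - a))) (x + (j : ℤ))) :=
                ENNReal.tsum_mul_left
            _ = ENNReal.ofReal (θ ^ (j + k) * p ^ j * q ^ k /
                  ((j.factorial : ℝ) * k.factorial)) * ENNReal.ofReal (cR (z + j + k)) := by
                congr 1
                calc ∑' x : ℤ, ENNReal.ofReal ((fun a : ℤ => cR a * p ^ a *
                        (cR (z + j + k - a) * q ^ (z + j + k - a))) (x + (j : ℤ)))
                    = ∑' a : ℤ, ENNReal.ofReal (cR a * p ^ a *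
                        (cR (z + j + k - a) * q ^ (z + j + k - a))) :=
                      Equiv.tsum_eq (Equiv.addRight (j : ℤ)) (fun a : ℤ => ENNReal.ofReal
                        (cR a * p ^ a * (cR (z + j + k - a) * q ^ (z + j + k - a))))
                  _ = ∑ a ∈ Finset.Icc (0 : ℤ) (z + j + k), ENNReal.ofReal (cR a * p ^ a *
                        (cR (z + j + k - a) * q ^ (z + j + k - a))) := by
                      refine tsum_eq_sum fun a ha => ?_
                      rw [Finset.mem_Icc] at ha
                      push_neg at ha
                      rcases lt_or_ge a 0 with h | h
                      · rw [cR_neg h]; simp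
                      · rw [cR_neg (by have := ha h; omega : z + j + k - a < 0)]; simp
                  _ = ENNReal.ofReal (∑ a ∈ Finset.Icc (0 : ℤ) (z + j + k), cR a * p ^ a *
                        (cR (z + j + k - a) * q ^ (z + j + k - a))) :=
                      (ENNReal.ofReal_sum_of_nonneg fun a _ => hvnn _ a).symm
                  _ = ENNReal.ofReal (cR (z + j + k)) := by rw [icc_sum hpq]
            _ = ENNReal.ofReal (θ ^ (j + k) * p ^ j * q ^ k /
                  ((j.factorial : ℝ) * k.factorial) * cR (z + j + k)) :=
                (ENNReal.ofReal_mul (hCnn (j, k))).symm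
      _ = ∑' m : ℕ, ENNReal.ofReal (θ ^ m * cR (z + m) / m.factorial) := by
          rw [← Equiv.tsum_eq (Finset.HasAntidiagonal.sigmaAntidiagonalEquivProd (A := ℕ))
            (fun jk : ℕ × ℕ => ENNReal.ofReal (θ ^ (jk.1 + jk.2) * p ^ jk.1 * q ^ jk.2 /
              ((jk.1.factorial : ℝ) * jk.2.factorial) * cR (z + jk.1 + jk.2))),
            ENNReal.tsum_sigma']
          refine tsum_congr fun m => ?_
          have hred : ∀ b : {x // x ∈ Finset.HasAntidiagonal.antidiagonal m},
              (Finset.HasAntidiagonal.sigmaAntidiagonalEquivProd ⟨m, b⟩ : ℕ × ℕ) = (b : ℕ × ℕ) := fun b => rfl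
          simp only [hred]
          rw [Finset.tsum_subtype (Finset.HasAntidiagonal.antidiagonal m) (fun jk : ℕ × ℕ =>
            ENNReal.ofReal (θ ^ (jk.1 + jk.2) * p ^ jk.1 * q ^ jk.2 /
              ((jk.1.factorial : ℝ) * jk.2.factorial) * cR (z + jk.1 + jk.2))),
            ← ENNReal.ofReal_sum_of_nonneg (fun i _ => mul_nonneg (hCnn i) (cR_nonneg _)),
            antidiag_sum hpq]
      _ = ENNReal.ofReal (∑' m : ℕ, θ ^ m * cR (z + m) / m.factorial) :=
          (ENNReal.ofReal_tsum_of_nonneg (fun m => div_nonneg (mul_nonneg (by positivity)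
            (cR_nonneg _)) (by positivity)) (summable_aux hθ.le z)).symm
      _ = ENNReal.ofReal (regF ((z : ℝ) + 1) θ) := by rw [regF_int]
  -- conclude
  have hfin : ∑' x : ℤ, ENNReal.ofReal (S x) ≠ ⊤ := by
    rw [key]; exact ENNReal.ofReal_ne_top
  have hSum : Summable S := by
    have h2 := ENNReal.summable_toReal hfin
    rwa [show (fun x => (ENNReal.ofReal (S x)).toReal) = S from
      funext fun x => ENNReal.toReal_ofReal (hSnn x)] at h2
  have h3 : ENNReal.ofReal (∑' x, S x) = ENNReal.ofReal (regF ((z : ℝ) + 1) θ) := by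
    rw [ENNReal.ofReal_tsum_of_nonneg hSnn hSum]; exact key
  have hR : 0 ≤ regF ((z : ℝ) + 1) θ := by
    rw [regF_int]
    exact tsum_nonneg fun k =>
      div_nonneg (mul_nonneg (by positivity) (cR_nonneg _)) (by positivity)
  have h4 := (ENNReal.ofReal_eq_ofReal_iff (tsum_nonneg hSnn) hR).mp h3
  rw [← h4]
  exact tsum_congr h1
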